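/- Fix a configuration p of n points in ℂ^d and a graph G with m edges. The image under the squared-length measurement map m_G of the set of all affine images of p is a linear subspace of ℂ^m. Concretely, the map n_{G,p} from symmetric d×d complex matrices Q to ℂ^m defined coordinatewise by n_{G,p}(Q)_{ij} = tr(Q e_{ij} e_{ij}^T), where e_{ij} = p i - p j, is linear, and its image equals { m_G(M∘p + t) : M a d×d complex matrix, t ∈ ℂ^d }. -/

import Mathlib

/-- The complex squared-length measurement of a configuration `q : Fin n → ℂ^d` on the
edges of `G` (edges indexed by adjacent ordered pairs). -/
noncomputable def cMeas {n d : ℕ} (G : SimpleGraph (Fin n)) (q : Fin n → Fin d → ℂ) :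
    {x : Fin n × Fin n // G.Adj x.1 x.2} → ℂ :=
  fun e => ∑ k, (q e.1.1 k - q e.1.2 k) ^ 2

/-- The map `Q ↦ (tr (Q e_{ij} e_{ij}ᵀ))_{ij ∈ E}` on `d×d` matrices, where
`e_{ij} = p i - p j`. -/
noncomputable def nGp {n d : ℕ} (G : SimpleGraph (Fin n)) (p : Fin n → Fin d → ℂ) :
    Matrix (Fin d) (Fin d) ℂ → ({x : Fin n × Fin n // G.Adj x.1 x.2} → ℂ) :=
  fun Q e => (Q * Matrix.vecMulVec (p e.1.1 - p e.1.2) (p e.1.1 - p e.1.2)).trace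

open Matrix

lemma meas_eq {d : ℕ} (M : Matrix (Fin d) (Fin d) ℂ) (v : Fin d → ℂ) :
    (∑ k, (M.mulVec v) k ^ 2) = ((Mᵀ * M) * Matrix.vecMulVec v v).trace := by
  simp only [Matrix.trace, Matrix.diag_apply, Matrix.mul_apply, Matrix.vecMulVec_apply,
    Matrix.mulVec, dotProduct, Matrix.transpose_apply, sq, Finset.mul_sum,
    Finset.sum_mul]
  rw [Finset.sum_comm]
  refine Finset.sum_congr rfl fun k _ => ?_
  rw [Finset.sum_comm]
  refine Finset.sum_congr rfl fun a _ => Finset.sum_congr rfl fun b _ => by ring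

lemma takagi {d : ℕ} (Q : Matrix (Fin d) (Fin d) ℂ) (hQ : Q.IsSymm) :
    ∃ M : Matrix (Fin d) (Fin d) ℂ, Mᵀ * M = Q := by
  have hB : (Matrix.toBilin' Q).IsSymm := by
    rw [LinearMap.BilinForm.isSymm_def]
    intro x y
    simp only [RingHom.id_apply, Matrix.toBilin'_apply']
    rw [Matrix.dotProduct_mulVec, ← Matrix.mulVec_transpose, hQ, dotProduct_comm]
  obtain ⟨v0, hv0⟩ := LinearMap.BilinForm.exists_orthogonal_basis (LinearMap.BilinForm.isSymm_iff.mp hB)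
  have hrank : Module.finrank ℂ (Fin d → ℂ) = d := by simp
  let v : Module.Basis (Fin d) ℂ (Fin d → ℂ) := v0.reindex (finCongr hrank)
  have hv : ∀ i j, i ≠ j → v i ⬝ᵥ Q.mulVec (v j) = 0 := by
    intro i j hij
    have := hv0 (show (finCongr hrank).symm i ≠ (finCongr hrank).symm j from
      fun h => hij (by simpa using congrArg (finCongr hrank) h))
    simpa [v, Function.onFun, LinearMap.IsOrtho, Matrix.toBilin'_apply'] using this
  let P : Matrix (Fin d) (Fin d) ℂ := (Pi.basisFun ℂ (Fin d)).toMatrix v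
  have hP : ∀ i j, P i j = v j i := by
    intro i j; simp [P, Module.Basis.toMatrix_apply]
  have key : Pᵀ * Q * P = Matrix.diagonal (fun i => v i ⬝ᵥ Q.mulVec (v i)) := by
    ext i j
    have h1 : (Pᵀ * Q * P) i j = v i ⬝ᵥ Q.mulVec (v j) := by
      simp only [Matrix.mul_apply, Matrix.transpose_apply, dotProduct,
        Matrix.mulVec, hP, Finset.sum_mul, Finset.mul_sum]
      rw [Finset.sum_comm]
      exact Finset.sum_congr rfl fun a _ => Finset.sum_congr rfl fun b _ => by ring
    rw [h1]
    rcases eq_or_ne i j with rfl | hij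
    · simp
    · rw [hv i j hij, Matrix.diagonal_apply_ne _ hij]
  choose s hs using fun i => IsAlgClosed.exists_pow_nat_eq (v i ⬝ᵥ Q.mulVec (v i)) two_pos
  haveI : Invertible P := (Pi.basisFun ℂ (Fin d)).invertibleToMatrix v
  refine ⟨Matrix.diagonal s * ⅟P, ?_⟩
  have hD : (Matrix.diagonal s)ᵀ * (Matrix.diagonal s) = Pᵀ * Q * P := by
    have h2 : (fun i => s i * s i) = fun i => v i ⬝ᵥ Q.mulVec (v i) :=
      funext fun i => by rw [← hs i]; ring
    rw [Matrix.diagonal_transpose, Matrix.diagonal_mul_diagonal, h2, key]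
  calc (Matrix.diagonal s * ⅟P)ᵀ * (Matrix.diagonal s * ⅟P)
      = (⅟P)ᵀ * ((Matrix.diagonal s)ᵀ * Matrix.diagonal s) * ⅟P := by
        simp only [Matrix.transpose_mul, Matrix.mul_assoc]
    _ = (⅟P)ᵀ * (Pᵀ * Q * P) * ⅟P := by rw [hD]
    _ = ((P * ⅟P)ᵀ) * Q * (P * ⅟P) := by
        simp only [Matrix.transpose_mul, Matrix.mul_assoc]
    _ = Q := by simp


lemma cMeas_affine {n d : ℕ} (G : SimpleGraph (Fin n)) (p : Fin n → Fin d → ℂ)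
    (M : Matrix (Fin d) (Fin d) ℂ) (t : Fin d → ℂ) :
    cMeas G (fun i => M.mulVec (p i) + t) = nGp G p (Mᵀ * M) := by
  funext e
  have hv : ∀ k, (M.mulVec (p e.1.1) + t) k - (M.mulVec (p e.1.2) + t) k
      = M.mulVec (p e.1.1 - p e.1.2) k := by
    intro k; simp [Matrix.mulVec_sub]
  simp only [cMeas, nGp, hv]
  exact meas_eq M _


/-- The measurement image of the set of affine images of a fixed configuration `p` is a
linear subspace of `ℂ^m`: the map `n_{G,p}` is linear, its image on symmetric matrices
is exactly the set of measurements of affine images `M ∘ p + t` of `p`, and hence the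
latter set is (the underlying set of) a linear subspace. -/
theorem stmt9 (n d : ℕ) (G : SimpleGraph (Fin n)) (p : Fin n → Fin d → ℂ) :
    IsLinearMap ℂ (nGp G p) ∧
    (Set.range (fun Mt : Matrix (Fin d) (Fin d) ℂ × (Fin d → ℂ) =>
        cMeas G (fun i => Mt.1.mulVec (p i) + Mt.2))
      = nGp G p '' {Q | Q.IsSymm}) ∧
    ∃ S : Submodule ℂ ({x : Fin n × Fin n // G.Adj x.1 x.2} → ℂ),
      (S : Set ({x : Fin n × Fin n // G.Adj x.1 x.2} → ℂ))
        = Set.range (fun Mt : Matrix (Fin d) (Fin d) ℂ × (Fin d → ℂ) =>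
            cMeas G (fun i => Mt.1.mulVec (p i) + Mt.2)) := by
  have hlin : IsLinearMap ℂ (nGp G p) := by
    constructor
    · intro A B; funext e; simp [nGp, Matrix.add_mul]
    · intro c A; funext e; simp [nGp, Matrix.smul_mul]
  have hset : Set.range (fun Mt : Matrix (Fin d) (Fin d) ℂ × (Fin d → ℂ) =>
        cMeas G (fun i => Mt.1.mulVec (p i) + Mt.2)) = nGp G p '' {Q | Q.IsSymm} := by
    ext y
    constructor
    · rintro ⟨⟨M, t⟩, rfl⟩
      exact ⟨Mᵀ * M, by simp [Matrix.IsSymm, Matrix.transpose_mul],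
        (cMeas_affine G p M t).symm⟩
    · rintro ⟨Q, hQ, rfl⟩
      obtain ⟨M, rfl⟩ := takagi Q hQ
      exact ⟨(M, 0), cMeas_affine G p M 0⟩
  refine ⟨hlin, hset, ?_⟩
  let symmS : Submodule ℂ (Matrix (Fin d) (Fin d) ℂ) :=
    { carrier := {Q | Q.IsSymm}
      add_mem' := fun ha hb => Matrix.IsSymm.add ha hb
      zero_mem' := Matrix.isSymm_zero
      smul_mem' := fun c A hA => hA.smul c }
  refine ⟨Submodule.map (IsLinearMap.mk' _ hlin) symmS, ?_⟩
  rw [Submodule.map_coe, hset]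
  rfl
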